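/- For any positive integer n and elements q, x of a commutative ring R, det[q^{|j−k|} + x·δ_{jk}]_{1≤j,k≤n} = (x+1)·u_n(1 − q^2 + (1+q^2)·x, q^2·x^2) − q^2·x^2·u_{n−1}(1 − q^2 + (1+q^2)·x, q^2·x^2), where δ_{jk} is the Kronecker delta. -/

import Mathlib

def lucasU {R : Type*} [CommRing R] (x y : R) : ℕ → R
  | 0 => 0
  | 1 => 1
  | n + 2 => x * lucasU x y (n + 1) - y * lucasU x y n

def lucasV {R : Type*} [CommRing R] (x y : R) : ℕ → R
  | 0 => 2
  | 1 => x
  | n + 2 => x * lucasV x y (n + 1) - y * lucasV x y n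

namespace Stmt16Aux

open Matrix

variable {R : Type*} [CommRing R]

/-- The tridiagonal matrix obtained from the original one by `P * M * Pᵀ`. -/
def T (q x : R) (n : ℕ) : Matrix (Fin n) (Fin n) R :=
  Matrix.of fun j k =>
    if (j : ℕ) = (k : ℕ) then
      (if (j : ℕ) + 1 = n then 1 + x else 1 - q ^ 2 + (1 + q ^ 2) * x)
    else if (j : ℕ) + 1 = (k : ℕ) ∨ (k : ℕ) + 1 = (j : ℕ) then -(q * x) else 0

/-- Upper unitriangular matrix with `-q` on the superdiagonal. -/
def P (q : R) (n : ℕ) : Matrix (Fin n) (Fin n) R :=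
  Matrix.of fun j k => if j = k then 1 else if (k : ℕ) = (j : ℕ) + 1 then -q else 0

lemma det_P (q : R) (n : ℕ) : (P q n).det = 1 := by
  rw [Matrix.det_of_upperTriangular]
  · simp [P]
  · intro j k h
    have hv : (k : ℕ) < (j : ℕ) := h
    simp only [P, Matrix.of_apply]
    split_ifs with h1 h2
    · exact absurd (congrArg Fin.val h1) (by omega)
    · omega
    · rfl

lemma sum_ite_coe {n : ℕ} (f : Fin n → R) (m : ℕ) :
    (∑ l : Fin n, if (l : ℕ) = m then f l else 0) =
      if h : m < n then f ⟨m, h⟩ else 0 := by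
  split
  · next h =>
    rw [Finset.sum_eq_single (⟨m, h⟩ : Fin n)]
    · simp
    · intro l _ hl
      exact if_neg fun hc => hl (Fin.ext hc)
    · intro hmem; exact absurd (Finset.mem_univ _) hmem
  · next h =>
    exact Finset.sum_eq_zero fun l _ => if_neg fun hc => by omega

lemma mul_P_left {n : ℕ} (q : R) (M : Matrix (Fin n) (Fin n) R) (j k : Fin n) :
    (P q n * M) j k =
      M j k - q * (if h : (j : ℕ) + 1 < n then M ⟨(j : ℕ) + 1, h⟩ k else 0) := by
  rw [Matrix.mul_apply]
  have key : ∀ l : Fin n, P q n j l * M l k =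
      (if j = l then M l k else 0) + (if (l : ℕ) = (j : ℕ) + 1 then -q * M l k else 0) := by
    intro l
    simp only [P, Matrix.of_apply]
    by_cases h1 : j = l
    · subst h1
      simp [show ¬((j : ℕ) = (j : ℕ) + 1) from by omega]
    · by_cases h2 : (l : ℕ) = (j : ℕ) + 1
      · simp [h1, h2]
      · simp [h1, h2]
  rw [Finset.sum_congr rfl fun l _ => key l, Finset.sum_add_distrib, Finset.sum_ite_eq,
    sum_ite_coe]
  simp only [Finset.mem_univ, if_true]
  rcases Nat.lt_or_ge ((j : ℕ) + 1) n with h | h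
  · rw [dif_pos h, dif_pos h]; ring
  · rw [dif_neg (by omega), dif_neg (by omega)]; ring

lemma mul_P_right {n : ℕ} (q : R) (M : Matrix (Fin n) (Fin n) R) (j k : Fin n) :
    (M * (P q n)ᵀ) j k =
      M j k - q * (if h : (k : ℕ) + 1 < n then M j ⟨(k : ℕ) + 1, h⟩ else 0) := by
  rw [Matrix.mul_apply]
  have key : ∀ l : Fin n, M j l * (P q n)ᵀ l k =
      (if k = l then M j l else 0) + (if (l : ℕ) = (k : ℕ) + 1 then -q * M j l else 0) := by
    intro l
    simp only [P, Matrix.transpose_apply, Matrix.of_apply]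
    by_cases h1 : k = l
    · subst h1
      simp [show ¬((k : ℕ) = (k : ℕ) + 1) from by omega]
    · by_cases h2 : (l : ℕ) = (k : ℕ) + 1
      · simp [h1, h2]; ring
      · simp [h1, h2]
  rw [Finset.sum_congr rfl fun l _ => key l, Finset.sum_add_distrib, Finset.sum_ite_eq,
    sum_ite_coe]
  simp only [Finset.mem_univ, if_true]
  rcases Nat.lt_or_ge ((k : ℕ) + 1) n with h | h
  · rw [dif_pos h, dif_pos h]; ring
  · rw [dif_neg (by omega), dif_neg (by omega)]; ring

lemma PMPt (q x : R) (n : ℕ) :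
    P q n * (Matrix.of fun j k : Fin n =>
        q ^ ((j : ℤ) - (k : ℤ)).natAbs + x * (if j = k then 1 else 0)) * (P q n)ᵀ
      = T q x n := by
  have natAbs_eq : ∀ a b : Fin n, ((a : ℤ) - (b : ℤ)).natAbs =
      ((a : ℕ) - (b : ℕ)) + ((b : ℕ) - (a : ℕ)) := fun a b => by omega
  have val_mk : ∀ (m : ℕ) (h : m < n), ((⟨m, h⟩ : Fin n) : ℕ) = m := fun _ _ => rfl
  ext j k
  simp only [mul_P_right, mul_P_left, Matrix.of_apply, T, Fin.ext_iff, natAbs_eq, val_mk]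
  rcases lt_trichotomy ((j : ℕ)) ((k : ℕ)) with hlt | heq | hgt
  · obtain ⟨f, hf⟩ : ∃ f, (k : ℕ) = (j : ℕ) + (f + 1) := ⟨(k : ℕ) - (j : ℕ) - 1, by omega⟩
    have hjn : (j : ℕ) + 1 < n := by omega
    rw [show ((j:ℕ) - (k:ℕ)) + ((k:ℕ) - (j:ℕ)) = f + 1 from by omega]
    rcases Nat.lt_or_ge ((k : ℕ) + 1) n with hkn | hkn
    · simp only [dif_pos hjn, dif_pos hkn]
      rw [show ((j:ℕ)+1 - (k:ℕ)) + ((k:ℕ) - ((j:ℕ)+1)) = f from by omega,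
        show ((j:ℕ) - ((k:ℕ)+1)) + (((k:ℕ)+1) - (j:ℕ)) = f + 2 from by omega,
        show ((j:ℕ)+1 - ((k:ℕ)+1)) + (((k:ℕ)+1) - ((j:ℕ)+1)) = f + 1 from by omega]
      split_ifs <;> first
        | omega
        | (first | ring | (obtain rfl : f = 0 := by omega; ring))
    · simp only [dif_pos hjn, dif_neg (show ¬((k:ℕ)+1 < n) from by omega)]
      rw [show ((j:ℕ)+1 - (k:ℕ)) + ((k:ℕ) - ((j:ℕ)+1)) = f from by omega]
      split_ifs <;> first
        | omega
        | (first | ring | (obtain rfl : f = 0 := by omega; ring))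
  · rw [show ((j:ℕ) - (k:ℕ)) + ((k:ℕ) - (j:ℕ)) = 0 from by omega]
    rcases Nat.lt_or_ge ((j : ℕ) + 1) n with hjn | hjn
    · have hkn : (k : ℕ) + 1 < n := by omega
      simp only [dif_pos hjn, dif_pos hkn]
      rw [show ((j:ℕ)+1 - (k:ℕ)) + ((k:ℕ) - ((j:ℕ)+1)) = 1 from by omega,
        show ((j:ℕ) - ((k:ℕ)+1)) + (((k:ℕ)+1) - (j:ℕ)) = 1 from by omega,
        show ((j:ℕ)+1 - ((k:ℕ)+1)) + (((k:ℕ)+1) - ((j:ℕ)+1)) = 0 from by omega]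
      split_ifs <;> first | omega | ring
    · have hkn : ¬ ((k : ℕ) + 1 < n) := by omega
      simp only [dif_neg (show ¬((j:ℕ)+1 < n) from by omega), dif_neg hkn]
      split_ifs <;> first | omega | ring
  · obtain ⟨f, hf⟩ : ∃ f, (j : ℕ) = (k : ℕ) + (f + 1) := ⟨(j : ℕ) - (k : ℕ) - 1, by omega⟩
    have hkn : (k : ℕ) + 1 < n := by omega
    rw [show ((j:ℕ) - (k:ℕ)) + ((k:ℕ) - (j:ℕ)) = f + 1 from by omega,
      show ((j:ℕ) - ((k:ℕ)+1)) + (((k:ℕ)+1) - (j:ℕ)) = f from by omega]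
    rcases Nat.lt_or_ge ((j : ℕ) + 1) n with hjn | hjn
    · simp only [dif_pos hjn, dif_pos hkn]
      rw [show ((j:ℕ)+1 - (k:ℕ)) + ((k:ℕ) - ((j:ℕ)+1)) = f + 2 from by omega,
        show ((j:ℕ)+1 - ((k:ℕ)+1)) + (((k:ℕ)+1) - ((j:ℕ)+1)) = f + 1 from by omega]
      split_ifs <;> first
        | omega
        | (first | ring | (obtain rfl : f = 0 := by omega; ring))
    · simp only [dif_neg (show ¬((j:ℕ)+1 < n) from by omega), dif_pos hkn]
      split_ifs <;> first
        | omega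
        | (first | ring | (obtain rfl : f = 0 := by omega; ring))

lemma det_T (q x : R) : ∀ n : ℕ, 0 < n → (T q x n).det =
    (x + 1) * lucasU (1 - q ^ 2 + (1 + q ^ 2) * x) (q ^ 2 * x ^ 2) n
      - q ^ 2 * x ^ 2 * lucasU (1 - q ^ 2 + (1 + q ^ 2) * x) (q ^ 2 * x ^ 2) (n - 1) := by
  intro n
  induction n using Nat.strong_induction_on with
  | _ n ih =>
    match n with
    | 0 => intro h; exact absurd h (by omega)
    | 1 =>
      intro _
      rw [show (T q x 1).det = T q x 1 0 0 from Matrix.det_fin_one _]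
      simp [T, lucasU]
      ring
    | 2 =>
      intro _
      rw [Matrix.det_fin_two]
      simp [T, lucasU]
      ring
    | (m + 3) =>
      intro _
      have sub1 : (T q x (m + 3)).submatrix Fin.succ ((0 : Fin (m + 3)).succAbove)
          = T q x (m + 2) := by
        ext a b
        simp only [Matrix.submatrix_apply, Fin.zero_succAbove, T, Matrix.of_apply,
          Fin.val_succ]
        split_ifs <;> first | rfl | omega
      have h10 : ((1 : Fin (m + 3)).succAbove 0 : ℕ) = 0 := by
        rw [Fin.succAbove_of_castSucc_lt]
        · rfl
        · rw [Fin.lt_def, Fin.coe_castSucc, Fin.val_zero, Fin.val_one]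
          omega
      have h1succ : ∀ b : Fin (m + 1), ((1 : Fin (m + 3)).succAbove b.succ : ℕ)
          = (b : ℕ) + 2 := by
        intro b
        rw [Fin.succAbove_of_le_castSucc, Fin.val_succ, Fin.val_succ]
        rw [Fin.le_def, Fin.coe_castSucc, Fin.val_succ, Fin.val_one]
        omega
      have sub2 : ((T q x (m + 3)).submatrix Fin.succ
            ((1 : Fin (m + 3)).succAbove)).submatrix Fin.succ Fin.succ
          = T q x (m + 1) := by
        ext a b
        simp only [Matrix.submatrix_apply, T, Matrix.of_apply, Fin.val_succ, h1succ]
        split_ifs <;> first | rfl | omega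
      rw [Matrix.det_succ_row_zero, Fin.sum_univ_succ, Fin.sum_univ_succ]
      have hz : ∀ j : Fin (m + 1),
          T q x (m + 3) 0 j.succ.succ = 0 := by
        intro j
        simp only [T, Matrix.of_apply]
        rw [if_neg (by simp only [Fin.val_succ, Fin.val_zero]; omega),
          if_neg (by simp only [Fin.val_succ, Fin.val_zero]; omega)]
      rw [Finset.sum_eq_zero fun j _ => by rw [hz j]; ring]
      have e00 : T q x (m + 3) 0 0 = 1 - q ^ 2 + (1 + q ^ 2) * x := by
        have h1 : ¬ ((0 : ℕ) + 1 = m + 3) := by omega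
        simp [T, h1]
      have e01 : T q x (m + 3) 0 (1 : Fin (m + 3)) = -(q * x) := by
        simp [T]
      -- second minor: expand along first column
      have minor2 : ((T q x (m + 3)).submatrix Fin.succ
            ((1 : Fin (m + 3)).succAbove)).det = -(q * x) * (T q x (m + 1)).det := by
        rw [Matrix.det_succ_column_zero, Fin.sum_univ_succ]
        have hz2 : ∀ i : Fin (m + 1),
            ((T q x (m + 3)).submatrix Fin.succ ((1 : Fin (m + 3)).succAbove))
              i.succ 0 = 0 := by
          intro i
          simp only [Matrix.submatrix_apply, T, Matrix.of_apply, Fin.val_succ, h10]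
          rw [if_neg (by omega), if_neg (by omega)]
        rw [Finset.sum_eq_zero fun i _ => by rw [hz2 i]; ring]
        have eN00 : ((T q x (m + 3)).submatrix Fin.succ
              ((1 : Fin (m + 3)).succAbove)) 0 0 = -(q * x) := by
          simp only [Matrix.submatrix_apply, T, Matrix.of_apply, Fin.val_succ, Fin.val_zero,
            h10]
          rw [if_neg (by omega), if_pos (Or.inr trivial)]
        have : (0 : Fin (m + 2)).succAbove = Fin.succ := by
          funext i; exact Fin.zero_succAbove i
        rw [eN00, this, sub2]
        simp
      simp only [Fin.succ_zero_eq_one] at *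
      rw [sub1, minor2, e00, e01, ih (m + 2) (by omega) (by omega),
        ih (m + 1) (by omega) (by omega)]
      simp only [Fin.val_zero, Fin.val_succ, Fin.val_one, pow_zero, pow_one,
        show m + 3 - 1 = m + 2 from by omega, show m + 2 - 1 = m + 1 from by omega,
        show m + 1 - 1 = m from by omega, lucasU]
      ring

end Stmt16Aux

theorem stmt_16 {R : Type*} [CommRing R] (q x : R) (n : ℕ) (hn : 0 < n) :
    Matrix.det (Matrix.of fun j k : Fin n =>
        q ^ ((j : ℤ) - (k : ℤ)).natAbs + x * (if j = k then 1 else 0)) =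
      (x + 1) * lucasU (1 - q ^ 2 + (1 + q ^ 2) * x) (q ^ 2 * x ^ 2) n
        - q ^ 2 * x ^ 2 * lucasU (1 - q ^ 2 + (1 + q ^ 2) * x) (q ^ 2 * x ^ 2) (n - 1) := by
  have h := Stmt16Aux.PMPt q x n
  have hd := congrArg Matrix.det h
  rw [Matrix.det_mul, Matrix.det_mul, Stmt16Aux.det_P, Matrix.det_transpose,
    Stmt16Aux.det_P, one_mul, mul_one] at hd
  rw [hd, Stmt16Aux.det_T q x n hn]
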